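/- Let 𝒮 = {S^i}_{i=1}^d be a generalized 1D-ordered family and {h^i}_{i=1}^d ⊆ {0,1}^t a Gray code. For each j ∈ {1,...,t}, set L^j = (∪_{i: h^i_j=0} S^i) \ (∪_{i: h^i_j=1} S^i) and R^j = (∪_{i: h^i_j=1} S^i) \ (∪_{i: h^i_j=0} S^i). Then for every j and every u ∈ L^j, v ∈ R^j, the pair {u,v} is not contained in any S^i. -/
import Mathlib


/-- A Gray code for `d` numbers. -/
def IsGrayCode (d t : ℕ) (h : ℕ → Fin t → Bool) : Prop :=
  (∀ i j, i < d → j < d → i ≠ j → h i ≠ h j) ∧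
  (∀ i, i + 1 < d → (Finset.univ.filter fun j => h i j ≠ h (i + 1) j).card = 1)

/-- `L^j`: elements lying in some piece indexed where `h_j = 0` but in no piece
indexed where `h_j = 1`. -/
def Lset {α : Type*} [DecidableEq α] (d t : ℕ) (S : ℕ → Finset α)
    (h : ℕ → Fin t → Bool) (j : Fin t) : Finset α :=
  ((Finset.range d).filter fun i => h i j = false).biUnion S \
    ((Finset.range d).filter fun i => h i j = true).biUnion S

/-- `R^j`: elements lying in some piece indexed where `h_j = 1` but in no piece
indexed where `h_j = 0`. -/
def Rset {α : Type*} [DecidableEq α] (d t : ℕ) (S : ℕ → Finset α)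
    (h : ℕ → Fin t → Bool) (j : Fin t) : Finset α :=
  ((Finset.range d).filter fun i => h i j = true).biUnion S \
    ((Finset.range d).filter fun i => h i j = false).biUnion S

/-- For a generalized 1D-ordered family and a Gray code, each `{L^j, R^j}` is a
biclique in the conflict graph: no `S i` contains both an element of `L^j` and an
element of `R^j`. -/
theorem gray_code_biclique {α : Type*} [DecidableEq α] (d t : ℕ)
    (S : ℕ → Finset α)
    (hord : ∀ i j, i < d → j < d → i + 2 ≤ j → S i ∩ S j = ∅)
    (h : ℕ → Fin t → Bool) (hg : IsGrayCode d t h)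
    (j : Fin t) (u v : α)
    (hu : u ∈ Lset d t S h j) (hv : v ∈ Rset d t S h j) :
    ∀ i, i < d → ¬ (u ∈ S i ∧ v ∈ S i) := by
  rintro i hi ⟨hui, hvi⟩
  simp only [Lset, Rset, Finset.mem_sdiff, Finset.mem_biUnion, Finset.mem_filter,
    Finset.mem_range, not_exists] at hu hv
  cases hb : h i j with
  | false => exact hv.2 i ⟨⟨hi, hb⟩, hvi⟩
  | true => exact hu.2 i ⟨⟨hi, hb⟩, hui⟩
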